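/- Let a : ℕ → ℚ be the cubical Gromov coefficients: a(0)=1, a(1)=-1, a(2)=A, and 2·a(n) = -(∑_{k=0}^{n-2} a(k)·C(n-1,k)·2^{n-1-k} + ∑_{k=0}^{n-1} a(k)·C(n,k)·2^{n-k}) for n ≥ 3. Define c(j,d) = ∑_{k=j}^{d} 2^{-k}·C(d-j,d-k)·a(k). Then for all d ≥ 3, 2·(c(0,d) + c(d,d)) = c(d-1,d-1) - c(0,d-1). -/

import Mathlib

theorem stmt_13 (A : ℚ) (a : ℕ → ℚ)
    (h0 : a 0 = 1) (h1 : a 1 = -1) (h2 : a 2 = A)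
    (hrec : ∀ n, 3 ≤ n →
      2 * a n = -((∑ k ∈ Finset.range (n - 1), a k * ((n - 1).choose k : ℚ) * 2 ^ (n - 1 - k)) +
        ∑ k ∈ Finset.range n, a k * (n.choose k : ℚ) * 2 ^ (n - k)))
    (c : ℕ → ℕ → ℚ)
    (hc : ∀ j d, c j d = ∑ k ∈ Finset.Icc j d,
      ((d - j).choose (d - k) : ℚ) * a k / 2 ^ k) :
    ∀ d, 3 ≤ d → 2 * (c 0 d + c d d) = c (d - 1) (d - 1) - c 0 (d - 1) := by
  intro d hd
  obtain ⟨n, rfl⟩ : ∃ n, d = n + 3 := ⟨d - 3, by omega⟩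
  have hsingle : ∀ m : ℕ, c m m = a m / 2 ^ m := by
    intro m; rw [hc]; simp
  have hIcc : ∀ m : ℕ, Finset.Icc 0 m = Finset.range (m + 1) := by
    intro m; ext x; simp [Nat.lt_succ_iff]
  have hc0 : ∀ m : ℕ, c 0 m = ∑ k ∈ Finset.range (m + 1), (m.choose k : ℚ) * a k / 2 ^ k := by
    intro m
    rw [hc, hIcc]
    apply Finset.sum_congr rfl
    intro k hk
    rw [Finset.mem_range] at hk
    rw [Nat.sub_zero, Nat.choose_symm (by omega)]
  have hdiv : ∀ (M N : ℕ) (f : ℕ → ℚ), M ≤ N + 1 →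
      ∑ k ∈ Finset.range M, f k / 2 ^ k =
      (∑ k ∈ Finset.range M, f k * 2 ^ (N - k)) / 2 ^ N := by
    intro M N f hMN
    rw [Finset.sum_div]
    apply Finset.sum_congr rfl
    intro k hk
    rw [Finset.mem_range] at hk
    have h2k : (2 : ℚ) ^ k ≠ 0 := by positivity
    have h2N : (2 : ℚ) ^ N ≠ 0 := by positivity
    have hp : (2 : ℚ) ^ N = 2 ^ (N - k) * 2 ^ k := by
      rw [← pow_add]
      congr 1
      omega
    rw [div_eq_div_iff h2k h2N]
    linear_combination f k * hp
  have hrec3 := hrec (n + 3) (by omega)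
  have harith : n + 3 - 1 = n + 2 := by omega
  rw [harith] at hrec3
  rw [hc0, hc0, hsingle, hsingle]
  simp only [harith]
  have e1 : ∑ k ∈ Finset.range (n + 3 + 1), ((n + 3).choose k : ℚ) * a k / 2 ^ k =
      (∑ k ∈ Finset.range (n + 4), ((n + 3).choose k : ℚ) * a k * 2 ^ (n + 3 - k)) / 2 ^ (n + 3) :=
    hdiv (n + 4) (n + 3) _ (by omega)
  have e2 : ∑ k ∈ Finset.range (n + 2 + 1), ((n + 2).choose k : ℚ) * a k / 2 ^ k =
      (∑ k ∈ Finset.range (n + 3), ((n + 2).choose k : ℚ) * a k * 2 ^ (n + 3 - k)) / 2 ^ (n + 3) :=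
    hdiv (n + 3) (n + 3) _ (by omega)
  rw [e1, e2]
  have hS : ∑ k ∈ Finset.range (n + 4), ((n + 3).choose k : ℚ) * a k * 2 ^ (n + 3 - k) =
      (∑ k ∈ Finset.range (n + 3), a k * ((n + 3).choose k : ℚ) * 2 ^ (n + 3 - k)) + a (n + 3) := by
    rw [Finset.sum_range_succ]
    simp [mul_comm]
  have hT : ∑ k ∈ Finset.range (n + 3), ((n + 2).choose k : ℚ) * a k * 2 ^ (n + 3 - k) =
      2 * (∑ k ∈ Finset.range (n + 2), a k * ((n + 2).choose k : ℚ) * 2 ^ (n + 2 - k))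
        + 2 * a (n + 2) := by
    rw [Finset.sum_range_succ, Finset.mul_sum]
    have hstep : ∀ k ∈ Finset.range (n + 2),
        ((n + 2).choose k : ℚ) * a k * 2 ^ (n + 3 - k)
          = 2 * (a k * ((n + 2).choose k : ℚ) * 2 ^ (n + 2 - k)) := by
      intro k hk
      rw [Finset.mem_range] at hk
      have : n + 3 - k = (n + 2 - k) + 1 := by omega
      rw [this, pow_succ]
      ring
    rw [Finset.sum_congr rfl hstep]
    have : n + 3 - (n + 2) = 1 := by omega
    rw [this]
    simp
    ring
  rw [hS, hT]
  have h2N : (2 : ℚ) ^ (n + 3) ≠ 0 := by positivity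
  have h2m : (2 : ℚ) ^ (n + 2) ≠ 0 := by positivity
  field_simp
  linear_combination (8 * (2:ℚ) ^ n) * hrec3
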